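/- Let θ ∈ ℂ with |θ| = 1, θ ≠ 1, θ ≠ -1, and let u be the n×n matrix with u k l = (if k = l then 1 else 0) + (θ - 1)/n. If f : Fin n × Fin n → ℂ is antisymmetric (f (k,l) = -f (l,k) for all k, l) and has all row sums zero (Σ_l f (k,l) = 0 for all k), then D_u f = (conj θ) • C_u f; that is, f is an eigenfunction of the Berezin transform I_u with eigenvalue conj θ. -/

import Mathlib

open Finset Matrix

/-- The symbol-to-operator map `C_u`. -/
noncomputable def Cmap {ι : Type*} [Fintype ι] (u : Matrix ι ι ℂ) (f : ι × ι → ℂ) :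
    Matrix ι ι ℂ :=
  fun k k' => ∑ l, u k l * f (k, l) * (starRingEnd ℂ) (u k' l)

/-- The symbol-to-operator map `D_u`. -/
noncomputable def Dmap {ι : Type*} [Fintype ι] (u : Matrix ι ι ℂ) (f : ι × ι → ℂ) :
    Matrix ι ι ℂ :=
  fun k k' => ∑ l, u k l * f (k', l) * (starRingEnd ℂ) (u k' l)

/-- for the unitary matrix `u k l = δ_{kl} + (θ - 1)/n` with `|θ| = 1`,
`θ ≠ ±1`, every antisymmetric function `f` with zero row sums is an eigenfunction of the
Berezin transform `I_u` with eigenvalue `conj θ`; the eigenvalue equation is expressed as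
`D_u f = conj θ • C_u f`. -/
theorem stmt15 (n : ℕ) (hn : 1 ≤ n) (θ : ℂ)
    (hθ : ‖θ‖ = 1) (hθ1 : θ ≠ 1) (hθ2 : θ ≠ -1)
    (u : Matrix (Fin n) (Fin n) ℂ)
    (hu : ∀ k l, u k l = (if k = l then 1 else 0) + (θ - 1) / (n : ℂ))
    (f : Fin n × Fin n → ℂ)
    (hanti : ∀ k l, f (k, l) = -f (l, k))
    (hrow : ∀ k, ∑ l, f (k, l) = 0) :
    Dmap u f = (starRingEnd ℂ) θ • Cmap u f := by
  have hdiag : ∀ k, f (k, k) = 0 := fun k => by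
    have h := hanti k k; linear_combination (1/2 : ℂ) * h
  set c : ℂ := (θ - 1) / n with hc
  set d : ℂ := ((starRingEnd ℂ) θ - 1) / n with hd
  have hcc : (starRingEnd ℂ) c = d := by
    simp [hc, hd, map_div₀, map_sub]
  have hθθ : (starRingEnd ℂ) θ * θ = 1 := by
    have h1 : Complex.normSq θ = 1 := by rw [← Complex.sq_norm, hθ]; norm_num
    rw [mul_comm, Complex.mul_conj]
    exact_mod_cast congrArg (Complex.ofReal) h1
  have hn0 : (n : ℂ) ≠ 0 := Nat.cast_ne_zero.mpr (by omega)
  have heig : -d = (starRingEnd ℂ) θ * c := by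
    rw [hc, hd]; field_simp; linear_combination -hθθ
  have key : ∀ (g : Fin n → ℂ) (k k' : Fin n),
      (∑ l, ((if k = l then (1:ℂ) else 0) + c) * g l * ((if k' = l then (1:ℂ) else 0) + d))
      = (if k = k' then g k else 0) + d * g k + c * g k' + c * d * ∑ l, g l := by
    intro g k k'
    have h1 : ∀ l, ((if k = l then (1:ℂ) else 0) + c) * g l * ((if k' = l then (1:ℂ) else 0) + d)
        = (if k = l then (if k' = l then g l else 0) else 0) + (if k = l then d * g l else 0)
          + (if k' = l then c * g l else 0) + c * d * g l := by
      intro l; split_ifs <;> ring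
    rw [Finset.sum_congr rfl (fun l _ => h1 l)]
    simp only [Finset.sum_add_distrib, Finset.sum_ite_eq, Finset.mem_univ, if_true,
      ← Finset.mul_sum]
    rcases eq_or_ne k k' with rfl | h
    · simp
    · simp [h, Ne.symm h]
  ext k k'
  have hD : Dmap u f k k' = d * f (k', k) := by
    have := key (fun l => f (k', l)) k k'
    simp only [Dmap, hu, ← hc]
    rw [show (∑ l, ((if k = l then (1:ℂ) else 0) + c) * f (k', l) *
        (starRingEnd ℂ) ((if k' = l then (1:ℂ) else 0) + c))
      = ∑ l, ((if k = l then (1:ℂ) else 0) + c) * f (k', l) * ((if k' = l then (1:ℂ) else 0) + d)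
      from Finset.sum_congr rfl fun l _ => by simp [hcc, apply_ite (starRingEnd ℂ)]]
    rw [this, hrow k', hdiag k']
    rcases eq_or_ne k k' with h | h
    · subst h; simp [hdiag]
    · simp [h]
  have hC : Cmap u f k k' = c * f (k, k') := by
    have := key (fun l => f (k, l)) k k'
    simp only [Cmap, hu, ← hc]
    rw [show (∑ l, ((if k = l then (1:ℂ) else 0) + c) * f (k, l) *
        (starRingEnd ℂ) ((if k' = l then (1:ℂ) else 0) + c))
      = ∑ l, ((if k = l then (1:ℂ) else 0) + c) * f (k, l) * ((if k' = l then (1:ℂ) else 0) + d)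
      from Finset.sum_congr rfl fun l _ => by simp [hcc, apply_ite (starRingEnd ℂ)]]
    rw [this, hrow k, hdiag k]
    rcases eq_or_ne k k' with h | h
    · subst h; simp [hdiag]
    · simp [h]
  rw [Matrix.smul_apply, hD, hC, smul_eq_mul, hanti k' k]
  linear_combination f (k, k') * heig
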